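/- Semantic invariance: Let P be a special product rule. For all terms u, v ∈ Terms(X), if u ≈ v then for every P-automaton 𝒜 over variables X we have ⟦u⟧_𝒜 = ⟦v⟧_𝒜. -/

import Mathlib

namespace PSeries

/-- A (formal power) series over alphabet `A` with rational coefficients. -/
abbrev Series (A : Type) : Type := List A → ℚ

/-- Left derivative of a series by a letter. -/
def deriv {A : Type} (a : A) (f : Series A) : Series A := fun w => f (a :: w)

/-- Right derivative of a series by a letter. -/
def derivR {A : Type} (b : A) (f : Series A) : Series A := fun w => f (w ++ [b])

/-- Reversal of a series. -/
def rev {A : Type} (f : Series A) : Series A := fun w => f w.reverse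

/-- Terms over a set of variables `X`:  `u ::= x | 0 | c·u | u + v | u * v`. -/
inductive Term (X : Type) : Type
  | var : X → Term X
  | zero : Term X
  | smul : ℚ → Term X → Term X
  | add : Term X → Term X → Term X
  | mul : Term X → Term X → Term X

namespace Term

/-- Simultaneous substitution of terms for variables. -/
def subst {X Y : Type} : Term X → (X → Term Y) → Term Y
  | var x, ρ => ρ x
  | zero, _ => zero
  | smul c u, ρ => smul c (u.subst ρ)
  | add u v, ρ => add (u.subst ρ) (v.subst ρ)
  | mul u v, ρ => mul (u.subst ρ) (v.subst ρ)

/-- Semantics of a term on series, with the product symbol interpreted by `m`. -/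
def evalS {A X : Type} (m : Series A → Series A → Series A) :
    Term X → (X → Series A) → Series A
  | var x, ρ => ρ x
  | zero, _ => 0
  | smul c u, ρ => c • u.evalS m ρ
  | add u v, ρ => u.evalS m ρ + v.evalS m ρ
  | mul u v, ρ => m (u.evalS m ρ) (v.evalS m ρ)

/-- Evaluation of a term in the rationals (product is rational multiplication). -/
def evalQ {X : Type} : Term X → (X → ℚ) → ℚ
  | var x, F => F x
  | zero, _ => 0
  | smul c u, F => c * u.evalQ F
  | add u v, F => u.evalQ F + v.evalQ F
  | mul u v, F => u.evalQ F * v.evalQ F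

/-- Evaluation of a term in a commutative `ℚ`-algebra. -/
def evalA {R : Type} [CommRing R] [Algebra ℚ R] {X : Type} :
    Term X → (X → R) → R
  | var x, ρ => ρ x
  | zero, _ => 0
  | smul c u, ρ => c • u.evalA ρ
  | add u v, ρ => u.evalA ρ + v.evalA ρ
  | mul u v, ρ => u.evalA ρ * v.evalA ρ

end Term

/-- `m` is the `P`-product for the product rule `P`; that is, `m` satisfies the
two defining equations `(f*g)(ε) = f(ε)·g(ε)` and `δ_a (f*g) = P(f, δ_a f, g, δ_a g)`. -/
def IsPProduct {A : Type} (P : Term (Fin 4)) (m : Series A → Series A → Series A) : Prop :=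
  (∀ f g : Series A, m f g [] = f [] * g []) ∧
  (∀ (f g : Series A) (a : A),
    deriv a (m f g) = P.evalS m ![f, deriv a f, g, deriv a g])

/-- The smallest congruence on terms generated by the axioms of
commutative (not necessarily unital) `ℚ`-algebras. -/
inductive TEq {X : Type} : Term X → Term X → Prop
  | refl (u : Term X) : TEq u u
  | symm {u v : Term X} : TEq u v → TEq v u
  | trans {u v w : Term X} : TEq u v → TEq v w → TEq u w
  | smul_congr (c : ℚ) {u v : Term X} : TEq u v → TEq (.smul c u) (.smul c v)
  | add_congr {u u' v v' : Term X} : TEq u u' → TEq v v' → TEq (.add u v) (.add u' v')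
  | mul_congr {u u' v v' : Term X} : TEq u u' → TEq v v' → TEq (.mul u v) (.mul u' v')
  | one_smul (u : Term X) : TEq (.smul 1 u) u
  | smul_smul (c d : ℚ) (u : Term X) : TEq (.smul c (.smul d u)) (.smul (c * d) u)
  | add_smul (c d : ℚ) (u : Term X) : TEq (.smul (c + d) u) (.add (.smul c u) (.smul d u))
  | smul_add (c : ℚ) (u v : Term X) : TEq (.smul c (.add u v)) (.add (.smul c u) (.smul c v))
  | add_zero (u : Term X) : TEq (.add u .zero) u
  | add_assoc (u v w : Term X) : TEq (.add (.add u v) w) (.add u (.add v w))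
  | add_comm (u v : Term X) : TEq (.add u v) (.add v u)
  | neg_cancel (u : Term X) : TEq (.add u (.smul (-1) u)) .zero
  | mul_addl (u v w : Term X) : TEq (.mul (.add u v) w) (.add (.mul u w) (.mul v w))
  | mul_smull (c : ℚ) (u v : Term X) : TEq (.mul (.smul c u) v) (.smul c (.mul u v))
  | mul_assoc (u v w : Term X) : TEq (.mul (.mul u v) w) (.mul u (.mul v w))
  | mul_comm (u v : Term X) : TEq (.mul u v) (.mul v u)

/-- A product rule `P` (a term over the variables `x = 0, ẋ = 1, y = 2, ẏ = 3`)
is special: it satisfies (P-add), (P-assoc) and (P-comm) up to the congruence `TEq`.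
In the first two equations the six variables are `x = 0, ẋ = 1, y = 2, ẏ = 3, z = 4, ż = 5`. -/
def Special (P : Term (Fin 4)) : Prop :=
  TEq (P.subst (![.add (.var 0) (.var 2), .add (.var 1) (.var 3), .var 4, .var 5] :
        Fin 4 → Term (Fin 6)))
      (.add (P.subst (![.var 0, .var 1, .var 4, .var 5] : Fin 4 → Term (Fin 6)))
            (P.subst (![.var 2, .var 3, .var 4, .var 5] : Fin 4 → Term (Fin 6)))) ∧
  TEq (P.subst (![.var 0, .var 1, .mul (.var 2) (.var 4),
        P.subst (![.var 2, .var 3, .var 4, .var 5] : Fin 4 → Term (Fin 6))] :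
        Fin 4 → Term (Fin 6)))
      (P.subst (![.mul (.var 0) (.var 2),
        P.subst (![.var 0, .var 1, .var 2, .var 3] : Fin 4 → Term (Fin 6)), .var 4, .var 5] :
        Fin 4 → Term (Fin 6))) ∧
  TEq P (P.subst (![.var 2, .var 3, .var 0, .var 1] : Fin 4 → Term (Fin 4)))

/-- A binary operation on series is bilinear, associative and commutative. -/
def IsBAC {A : Type} (m : Series A → Series A → Series A) : Prop :=
  (∀ f g h : Series A, m (f + g) h = m f h + m g h) ∧
  (∀ (c : ℚ) (f g : Series A), m (c • f) g = c • m f g) ∧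
  (∀ f g h : Series A, m f (g + h) = m f g + m f h) ∧
  (∀ (c : ℚ) (f g : Series A), m f (c • g) = c • m f g) ∧
  (∀ f g h : Series A, m (m f g) h = m f (m g h)) ∧
  (∀ f g : Series A, m f g = m g f)

/-- The smallest set of series containing `0` and the generators `G`, closed under
scalar multiplication, addition, and the product `m`. -/
inductive InAlg {A : Type} (m : Series A → Series A → Series A) (G : Set (Series A)) :
    Series A → Prop
  | zero : InAlg m G 0
  | gen {g : Series A} : g ∈ G → InAlg m G g
  | smul (c : ℚ) {f : Series A} : InAlg m G f → InAlg m G (c • f)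
  | add {f g : Series A} : InAlg m G f → InAlg m G g → InAlg m G (f + g)
  | mul {f g : Series A} : InAlg m G f → InAlg m G g → InAlg m G (m f g)

/-- `f` is `P`-finite (w.r.t. the `P`-product `m`): there are finitely many generators
`g 0 = f, g 1, …` all of whose left derivatives lie in the algebra they generate. -/
def PFinite {A : Type} (m : Series A → Series A → Series A) (f : Series A) : Prop :=
  ∃ (k : ℕ) (g : Fin (k + 1) → Series A),
    g 0 = f ∧ ∀ (i : Fin (k + 1)) (a : A), InAlg m (Set.range g) (deriv a (g i))

/-- A `P`-automaton: output function `out` and transition function `tr`. -/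
structure PAutomaton (A X : Type) where
  out : X → ℚ
  tr : A → X → Term X

/-- The `P`-extension of a function `D : X → Term X` to all terms. -/
def pext {X : Type} (P : Term (Fin 4)) (D : X → Term X) : Term X → Term X
  | .var x => D x
  | .zero => .zero
  | .smul c u => .smul c (pext P D u)
  | .add u v => .add (pext P D u) (pext P D v)
  | .mul u v => P.subst ![u, pext P D u, v, pext P D v]

/-- Homomorphic extension of the output function of a `P`-automaton to all terms. -/
def PAutomaton.outT {A X : Type} (𝒜 : PAutomaton A X) (u : Term X) : ℚ :=
  u.evalQ 𝒜.out

/-- Extension of the (`P`-extended) transition function of a `P`-automaton to words. -/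
def trWord {A X : Type} (P : Term (Fin 4)) (𝒜 : PAutomaton A X) :
    List A → Term X → Term X
  | [], u => u
  | a :: w, u => trWord P 𝒜 w (pext P (𝒜.tr a) u)

/-- The semantics of a `P`-automaton: the unique map with `⟦α⟧(ε) = F(α)` and
`δ_a ⟦α⟧ = ⟦Δ̃_a α⟧`; concretely, `⟦α⟧(w) = F(Δ̃_w α)`. -/
def asem {A X : Type} (P : Term (Fin 4)) (𝒜 : PAutomaton A X) (u : Term X) : Series A :=
  fun w => (trWord P 𝒜 w u).evalQ 𝒜.out

/-- `ℚ[X]⁰`: polynomials in commuting variables `X` with zero constant term. -/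
noncomputable def Aug (X : Type) : Submodule ℚ (MvPolynomial X ℚ) where
  carrier := {p | MvPolynomial.coeff 0 p = 0}
  add_mem' := by
    intro a b ha hb
    simp only [Set.mem_setOf_eq, MvPolynomial.coeff_add] at *
    rw [ha, hb, add_zero]
  zero_mem' := by simp
  smul_mem' := by
    intro c p hp
    simp only [Set.mem_setOf_eq, MvPolynomial.coeff_smul] at *
    rw [hp, smul_zero]

/-- The variable `x` as an element of `ℚ[X]⁰`. -/
noncomputable def Aug.var {X : Type} (x : X) : Aug X :=
  ⟨MvPolynomial.X x, by
    show MvPolynomial.coeff 0 (MvPolynomial.X x) = 0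
    simp [MvPolynomial.coeff_X']⟩

/-- The product of two elements of `ℚ[X]⁰`, again in `ℚ[X]⁰`. -/
noncomputable def Aug.mul {X : Type} (p q : Aug X) : Aug X :=
  ⟨(p : MvPolynomial X ℚ) * (q : MvPolynomial X ℚ), by
    show MvPolynomial.coeff 0 _ = 0
    have hp : MvPolynomial.constantCoeff (p : MvPolynomial X ℚ) = 0 := p.2
    have hq : MvPolynomial.constantCoeff (q : MvPolynomial X ℚ) = 0 := q.2
    have := map_mul MvPolynomial.constantCoeff (p : MvPolynomial X ℚ) (q : MvPolynomial X ℚ)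
    simpa [MvPolynomial.constantCoeff_eq, hp, hq] using this⟩

/-- A polynomial `P`-automaton over variables `X`. -/
structure PolyAutomaton (A X : Type) where
  out : X → ℚ
  tr : A → X → Aug X

/-- Extension to words of a family of (extended) transition maps on `ℚ[X]⁰`. -/
noncomputable def trWordP {A X : Type} (Dt : A → (Aug X →ₗ[ℚ] Aug X)) : List A → Aug X → Aug X
  | [], p => p
  | a :: w, p => trWordP Dt w (Dt a p)

/-- The ideal of `ℚ[X]` generated by all polynomials reachable from the initial
variable `x1` by words of length at most `n`. -/
noncomputable def reachIdeal {A X : Type} (Dt : A → (Aug X →ₗ[ℚ] Aug X)) (x1 : X) (n : ℕ) :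
    Ideal (MvPolynomial X ℚ) :=
  Ideal.span {p : MvPolynomial X ℚ |
    ∃ w : List A, w.length ≤ n ∧ p = ((trWordP Dt w (Aug.var x1) : Aug X) : MvPolynomial X ℚ)}





theorem evalA_subst {R : Type} [CommRing R] [Algebra ℚ R] {X Y : Type}
    (u : Term X) (ρ : X → Term Y) (σ : Y → R) :
    (u.subst ρ).evalA σ = u.evalA fun x => (ρ x).evalA σ := by
  induction u with
  | var x => rfl
  | zero => rfl
  | smul c u ih => simp [Term.subst, Term.evalA, ih]
  | add u v ihu ihv => simp [Term.subst, Term.evalA, ihu, ihv]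
  | mul u v ihu ihv => simp [Term.subst, Term.evalA, ihu, ihv]

theorem TEq.evalA_eq {R : Type} [CommRing R] [Algebra ℚ R] {X : Type}
    {u v : Term X} (h : TEq u v) (ρ : X → R) : u.evalA ρ = v.evalA ρ := by
  induction h with
  | refl u => rfl
  | symm _ ih => exact ih.symm
  | trans _ _ ih1 ih2 => exact ih1.trans ih2
  | smul_congr c _ ih => simp [Term.evalA, ih]
  | add_congr _ _ ih1 ih2 => simp [Term.evalA, ih1, ih2]
  | mul_congr _ _ ih1 ih2 => simp [Term.evalA, ih1, ih2]
  | one_smul u => simp [Term.evalA]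
  | smul_smul c d u => simp [Term.evalA, _root_.smul_smul]
  | add_smul c d u => simp [Term.evalA, _root_.add_smul]
  | smul_add c u v => simp [Term.evalA, _root_.smul_add]
  | add_zero u => simp [Term.evalA]
  | add_assoc u v w => simp [Term.evalA, _root_.add_assoc]
  | add_comm u v => simp [Term.evalA, _root_.add_comm]
  | neg_cancel u => simp [Term.evalA, neg_one_smul]
  | mul_addl u v w => simp [Term.evalA, add_mul]
  | mul_smull c u v => simp [Term.evalA, smul_mul_assoc]
  | mul_assoc u v w => simp [Term.evalA, _root_.mul_assoc]
  | mul_comm u v => simp [Term.evalA, _root_.mul_comm]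

/-- Evaluation of a product rule on four algebra elements. -/
def Pe {R : Type} [CommRing R] [Algebra ℚ R] (P : Term (Fin 4)) (a da b db : R) : R :=
  P.evalA ![a, da, b, db]

section PeLemmas
variable {R : Type} [CommRing R] [Algebra ℚ R] {P : Term (Fin 4)}

theorem Pe_addl (hP : Special P) (a da b db z dz : R) :
    Pe P (a + b) (da + db) z dz = Pe P a da z dz + Pe P b db z dz := by
  have h := hP.1.evalA_eq (R := R) ![a, da, b, db, z, dz]
  simp only [Term.evalA, evalA_subst] at h
  rw [show (fun x => Term.evalA ((![.add (.var 0) (.var 2), .add (.var 1) (.var 3), .var 4, .var 5] : Fin 4 → Term (Fin 6)) x) ![a, da, b, db, z, dz]) = ![a + b, da + db, z, dz] from by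
      funext i; fin_cases i <;> first | rfl | simp [Term.evalA, Matrix.cons_val_succ],
    show (fun x => Term.evalA ((![.var 0, .var 1, .var 4, .var 5] : Fin 4 → Term (Fin 6)) x) ![a, da, b, db, z, dz]) = ![a, da, z, dz] from by
      funext i; fin_cases i <;> first | rfl | simp [Term.evalA, Matrix.cons_val_succ],
    show (fun x => Term.evalA ((![.var 2, .var 3, .var 4, .var 5] : Fin 4 → Term (Fin 6)) x) ![a, da, b, db, z, dz]) = ![b, db, z, dz] from by
      funext i; fin_cases i <;> first | rfl | simp [Term.evalA, Matrix.cons_val_succ]] at h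
  exact h

theorem Pe_comm (hP : Special P) (a da b db : R) : Pe P a da b db = Pe P b db a da := by
  have h := hP.2.2.evalA_eq (R := R) ![a, da, b, db]
  simp only [Term.evalA, evalA_subst] at h
  rw [show (fun x => Term.evalA ((![.var 2, .var 3, .var 0, .var 1] : Fin 4 → Term (Fin 4)) x) ![a, da, b, db]) = ![b, db, a, da] from by
      funext i; fin_cases i <;> first | rfl | simp [Term.evalA, Matrix.cons_val_succ]] at h
  exact h

theorem Pe_assoc (hP : Special P) (a da b db z dz : R) :
    Pe P a da (b * z) (Pe P b db z dz) = Pe P (a * b) (Pe P a da b db) z dz := by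
  have h := hP.2.1.evalA_eq (R := R) ![a, da, b, db, z, dz]
  simp only [Term.evalA, evalA_subst] at h
  rw [show (fun x => Term.evalA ((![.var 0, .var 1, .mul (.var 2) (.var 4),
        P.subst (![.var 2, .var 3, .var 4, .var 5] : Fin 4 → Term (Fin 6))] : Fin 4 → Term (Fin 6)) x) ![a, da, b, db, z, dz]) = ![a, da, b * z, Pe P b db z dz] from by
      funext i; fin_cases i <;> first | rfl | simp [Term.evalA, evalA_subst, Pe, Matrix.cons_val_succ] <;>
        (congr 1; funext j; fin_cases j <;> first | rfl | simp [Term.evalA, Matrix.cons_val_succ]),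
    show (fun x => Term.evalA ((![.mul (.var 0) (.var 2),
        P.subst (![.var 0, .var 1, .var 2, .var 3] : Fin 4 → Term (Fin 6)), .var 4, .var 5] : Fin 4 → Term (Fin 6)) x) ![a, da, b, db, z, dz]) = ![a * b, Pe P a da b db, z, dz] from by
      funext i; fin_cases i <;> first | rfl | simp [Term.evalA, evalA_subst, Pe, Matrix.cons_val_succ] <;>
        (congr 1; funext j; fin_cases j <;> first | rfl | simp [Term.evalA, Matrix.cons_val_succ])] at h
  exact h

end PeLemmas

/-- A pair `(a, ȧ)` of algebra elements, with multiplication given by the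
product rule `P` in the second component. -/
structure Pair (P : Term (Fin 4)) (R : Type) : Type where
  fst : R
  snd : R

section PairAlgebra

variable {P : Term (Fin 4)} {R : Type} [CommRing R] [Algebra ℚ R]

@[ext] theorem Pair.ext' {x y : Pair P R} (h1 : x.fst = y.fst) (h2 : x.snd = y.snd) :
    x = y := by cases x; cases y; cases h1; cases h2; rfl

instance : Add (Pair P R) := ⟨fun x y => ⟨x.fst + y.fst, x.snd + y.snd⟩⟩
instance : Zero (Pair P R) := ⟨⟨0, 0⟩⟩
instance : Neg (Pair P R) := ⟨fun x => ⟨-x.fst, -x.snd⟩⟩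
instance : SMul ℚ (Pair P R) := ⟨fun c x => ⟨c • x.fst, c • x.snd⟩⟩
instance : Mul (Pair P R) := ⟨fun x y => ⟨x.fst * y.fst, Pe P x.fst x.snd y.fst y.snd⟩⟩

@[simp] theorem Pair.add_fst (x y : Pair P R) : (x + y).fst = x.fst + y.fst := rfl
@[simp] theorem Pair.add_snd (x y : Pair P R) : (x + y).snd = x.snd + y.snd := rfl
@[simp] theorem Pair.zero_fst : (0 : Pair P R).fst = 0 := rfl
@[simp] theorem Pair.zero_snd : (0 : Pair P R).snd = 0 := rfl
@[simp] theorem Pair.neg_fst (x : Pair P R) : (-x).fst = -x.fst := rfl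
@[simp] theorem Pair.neg_snd (x : Pair P R) : (-x).snd = -x.snd := rfl
@[simp] theorem Pair.smul_fst (c : ℚ) (x : Pair P R) : (c • x).fst = c • x.fst := rfl
@[simp] theorem Pair.smul_snd (c : ℚ) (x : Pair P R) : (c • x).snd = c • x.snd := rfl
@[simp] theorem Pair.mul_fst (x y : Pair P R) : (x * y).fst = x.fst * y.fst := rfl
@[simp] theorem Pair.mul_snd (x y : Pair P R) :
    (x * y).snd = Pe P x.fst x.snd y.fst y.snd := rfl

instance : AddCommGroup (Pair P R) where
  add_assoc a b c := by ext <;> simp [add_assoc]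
  zero_add a := by ext <;> simp
  add_zero a := by ext <;> simp
  neg_add_cancel a := by ext <;> simp
  add_comm a b := by ext <;> simp [add_comm]
  nsmul := nsmulRec
  zsmul := zsmulRec

instance : Module ℚ (Pair P R) where
  one_smul x := by ext <;> simp
  mul_smul c d x := by ext <;> simp [mul_smul]
  smul_zero c := by ext <;> simp
  smul_add c x y := by ext <;> simp
  add_smul c d x := by ext <;> simp [add_smul]
  zero_smul x := by ext <;> simp

variable (hP : Special P)

theorem Pe_zerol (hP : Special P) (z dz : R) : Pe P 0 0 z dz = 0 := by
  have h := Pe_addl hP (0 : R) 0 0 0 z dz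
  simp only [add_zero] at h
  exact (left_eq_add.mp h)

theorem Pe_smull (hP : Special P) (c : ℚ) (a da z dz : R) :
    Pe P (c • a) (c • da) z dz = c • Pe P a da z dz := by
  let F : ℚ →+ R := AddMonoidHom.mk' (fun c => Pe P (c • a) (c • da) z dz) (by
    intro c d
    simp only [add_smul]
    exact Pe_addl hP _ _ _ _ _ _)
  have h1 : F 1 = Pe P a da z dz := by simp [F]
  have := map_rat_smul F c (1 : ℚ)
  simpa [F, h1, smul_eq_mul] using this

theorem Pe_addr (hP : Special P) (a da b db z dz : R) :
    Pe P a da (b + z) (db + dz) = Pe P a da b db + Pe P a da z dz := by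
  rw [Pe_comm hP, Pe_addl hP, Pe_comm hP a da b db, Pe_comm hP a da z dz]

theorem Pe_zeror (hP : Special P) (a da : R) : Pe P a da 0 0 = 0 := by
  rw [Pe_comm hP]; exact Pe_zerol hP a da

theorem Pe_smulr (hP : Special P) (c : ℚ) (a da b db : R) :
    Pe P a da (c • b) (c • db) = c • Pe P a da b db := by
  rw [Pe_comm hP, Pe_smull hP, Pe_comm hP]

/-- The non-unital commutative ring structure on pairs induced by a special
product rule. -/
@[reducible] def pairRing (hP : Special P) : NonUnitalCommRing (Pair P R) :=
  { (inferInstance : AddCommGroup (Pair P R)),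
    (inferInstance : Mul (Pair P R)) with
    left_distrib := fun x y z => by ext <;> simp [mul_add, Pe_addr hP]
    right_distrib := fun x y z => by ext <;> simp [add_mul, Pe_addl hP]
    zero_mul := fun x => by ext <;> simp [Pe_zerol hP]
    mul_zero := fun x => by ext <;> simp [Pe_zeror hP]
    mul_assoc := fun x y z => by ext <;> simp [mul_assoc, Pe_assoc hP]
    mul_comm := fun x y => by ext <;> simp [mul_comm, Pe_comm hP x.fst x.snd y.fst y.snd] }

theorem pairTower (hP : Special P) : IsScalarTower ℚ (Pair P R) (Pair P R) :=
  ⟨fun c x y => by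
    show (c • x) * y = c • (x * y)
    ext <;> simp [smul_mul_assoc, Pe_smull hP]⟩

theorem pairSMulComm (hP : Special P) : SMulCommClass ℚ (Pair P R) (Pair P R) :=
  ⟨fun c x y => by
    show c • (x * y) = x * (c • y)
    ext <;> simp [mul_smul_comm, Pe_smulr hP]⟩

end PairAlgebra

/-- Interpretation of a term as a multivariate polynomial. -/
noncomputable def phi {X : Type} (u : Term X) : MvPolynomial X ℚ :=
  u.evalA MvPolynomial.X

section Main

variable {X : Type} {P : Term (Fin 4)}

theorem phi_pext_congr (hP : Special P) (D : X → Term X) {u v : Term X}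
    (h : phi u = phi v) : phi (pext P D u) = phi (pext P D v) := by
  classical
  letI : NonUnitalCommRing (Pair P (MvPolynomial X ℚ)) := pairRing hP
  letI : IsScalarTower ℚ (Pair P (MvPolynomial X ℚ)) (Pair P (MvPolynomial X ℚ)) :=
    pairTower hP
  letI : SMulCommClass ℚ (Pair P (MvPolynomial X ℚ)) (Pair P (MvPolynomial X ℚ)) :=
    pairSMulComm hP
  let g : X → Unitization ℚ (Pair P (MvPolynomial X ℚ)) := fun x => Unitization.inr ⟨MvPolynomial.X x, phi (D x)⟩
  have key : ∀ w : Term X,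
      MvPolynomial.aeval g (phi w) = Unitization.inr (⟨phi w, phi (pext P D w)⟩ : Pair P (MvPolynomial X ℚ)) := by
    intro w
    induction w with
    | var x => simp [phi, Term.evalA, pext, g]
    | zero =>
        show (MvPolynomial.aeval g) 0 = Unitization.inr (⟨0, 0⟩ : Pair P (MvPolynomial X ℚ))
        rw [map_zero]
        have : (⟨0, 0⟩ : Pair P (MvPolynomial X ℚ)) = 0 := rfl
        rw [this, Unitization.inr_zero]
    | smul c t ih =>
        show (MvPolynomial.aeval g) (c • phi t)
            = Unitization.inr (⟨c • phi t, c • phi (pext P D t)⟩ : Pair P (MvPolynomial X ℚ))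
        rw [map_smul, ih]
        have : (⟨c • phi t, c • phi (pext P D t)⟩ : Pair P (MvPolynomial X ℚ)) = c • (⟨phi t, phi (pext P D t)⟩ : Pair P (MvPolynomial X ℚ)) := rfl
        rw [this, Unitization.inr_smul]
    | add t s iht ihs =>
        show (MvPolynomial.aeval g) (phi t + phi s)
            = Unitization.inr (⟨phi t + phi s, phi (pext P D t) + phi (pext P D s)⟩ : Pair P (MvPolynomial X ℚ))
        rw [map_add, iht, ihs]
        have : (⟨phi t + phi s, phi (pext P D t) + phi (pext P D s)⟩ : Pair P (MvPolynomial X ℚ))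
            = (⟨phi t, phi (pext P D t)⟩ : Pair P (MvPolynomial X ℚ)) + ⟨phi s, phi (pext P D s)⟩ := rfl
        rw [this, Unitization.inr_add]
    | mul t s iht ihs =>
        have hsnd : phi (pext P D (t.mul s))
            = Pe P (phi t) (phi (pext P D t)) (phi s) (phi (pext P D s)) := by
          show Term.evalA (P.subst ![t, pext P D t, s, pext P D s]) MvPolynomial.X = _
          rw [evalA_subst]
          show P.evalA _ = P.evalA _
          congr 1
          funext i
          fin_cases i <;> rfl
        show (MvPolynomial.aeval g) (phi t * phi s)
            = Unitization.inr (⟨phi (t.mul s), phi (pext P D (t.mul s))⟩ : Pair P (MvPolynomial X ℚ))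
        rw [map_mul, iht, ihs, ← Unitization.inr_mul]
        congr 1
        exact Pair.ext' rfl hsnd.symm
  have h2 := congrArg (MvPolynomial.aeval g) h
  rw [key u, key v] at h2
  have h3 := Unitization.inr_injective (R := ℚ) h2
  exact congrArg Pair.snd h3

theorem evalQ_eq_aeval (F : X → ℚ) (t : Term X) :
    t.evalQ F = MvPolynomial.aeval F (phi t) := by
  induction t with
  | var x => simp [phi, Term.evalA, Term.evalQ]
  | zero => simp [phi, Term.evalA, Term.evalQ]
  | smul c t ih =>
      show c * t.evalQ F = MvPolynomial.aeval F (c • phi t)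
      rw [map_smul, ih, smul_eq_mul]
  | add t s iht ihs =>
      show t.evalQ F + s.evalQ F = MvPolynomial.aeval F (phi t + phi s)
      rw [map_add, iht, ihs]
  | mul t s iht ihs =>
      show t.evalQ F * s.evalQ F = MvPolynomial.aeval F (phi t * phi s)
      rw [map_mul, iht, ihs]

end Main

/-- **Semantic invariance.** For a special product rule `P`, equivalent terms have the
same semantics in every `P`-automaton. -/
theorem semantic_invariance {A : Type} [Fintype A] {X : Type}
    (P : Term (Fin 4)) (hP : Special P)
    (u v : Term X) (huv : TEq u v) (𝒜 : PAutomaton A X) :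
    asem P 𝒜 u = asem P 𝒜 v := by
  have key : ∀ (w : List A) (u v : Term X), phi u = phi v →
      phi (trWord P 𝒜 w u) = phi (trWord P 𝒜 w v) := by
    intro w
    induction w with
    | nil => intro u v h; exact h
    | cons a w ih =>
        intro u v h
        exact ih _ _ (phi_pext_congr hP (𝒜.tr a) h)
  funext w
  show (trWord P 𝒜 w u).evalQ 𝒜.out = (trWord P 𝒜 w v).evalQ 𝒜.out
  rw [evalQ_eq_aeval, evalQ_eq_aeval, key w u v (huv.evalA_eq MvPolynomial.X)]

end PSeries
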